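/- arXiv:2005.05743 — 5 statements merged into one kernel-verified Lean document; each statement's English description precedes it below -/
import Mathlib

section
/- Consider the scalar privacy-signaling game with privacy parameter δ > 0. Define r = −(δσx² + σy²)/(2δρ) − √((δσx² + σy²)² − 4δρ²)/(2δρ), the equilibrium encoder γ*(x,y) = x + r·y, Z* = γ*(X,Y), D = σx² + r²σy² + 2rρ, and the linear decoders dX*(z) = ((σx² + rρ)/D)·z and dY*(z) = ((ρ + rσy²)/D)·z. Then these policies form a Nash equilibrium: (a) for every measurable γ : ℝ² → ℝ with γ(X,Y) square-integrable, E[(Y − dY*(γ*(X,Y)))²] − δ·E[(X − dX*(γ*(X,Y)))²] ≤ E[(Y − dY*(γ(X,Y)))²] − δ·E[(X − dX*(γ(X,Y)))²]; and (b) for all measurable dX, dY : ℝ → ℝ with dX(Z*) and dY(Z*) square-integrable, E[(X − dX*(Z*))²] + E[(Y − dY*(Z*))²] ≤ E[(X − dX(Z*))²] + E[(Y − dY(Z*))²]. -/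
open MeasureTheory ProbabilityTheory Real
open scoped ENNReal NNReal

lemma aux_mul_int {Ω : Type*} [MeasurableSpace Ω] {P : Measure Ω} {f g : Ω → ℝ}
    (hf : MemLp f 2 P) (hg : MemLp g 2 P) : Integrable (fun ω => f ω * g ω) P := by
  refine Integrable.mono' (hf.integrable_sq.add hg.integrable_sq)
    (hf.aestronglyMeasurable.mul hg.aestronglyMeasurable) ?_
  filter_upwards with ω
  simp only [Real.norm_eq_abs, Pi.add_apply, abs_mul]
  nlinarith [sq_nonneg (|f ω| - |g ω|), sq_abs (f ω), sq_abs (g ω), abs_nonneg (f ω), abs_nonneg (g ω)]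

lemma aux_memℒp_gauss {Ω : Type*} [MeasurableSpace Ω] (P : Measure Ω) [IsProbabilityMeasure P]
    {G : Ω → ℝ} (hG : Measurable G) (hlaw : P.map G = gaussianReal 0 1) : MemLp G 2 P := by
  have h1 : MemLp id 2 (gaussianReal 0 1) := by
    rw [memLp_two_iff_integrable_sq aestronglyMeasurable_id]
    rw [gaussianReal_of_var_ne_zero 0 one_ne_zero]
    rw [integrable_withDensity_iff (measurable_gaussianPDF 0 1)
      (Filter.Eventually.of_forall fun x => ENNReal.ofReal_lt_top)]
    have : ∀ x : ℝ, (id x)^2 * (gaussianPDF 0 1 x).toReal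
        = (Real.sqrt (2 * π))⁻¹ * (x ^ 2 * Real.exp (-(2⁻¹) * x ^ 2)) := by
      intro x
      rw [gaussianPDF, ENNReal.toReal_ofReal (gaussianPDFReal_nonneg 0 1 x), gaussianPDFReal]
      simp only [id_eq]
      push_cast
      rw [mul_one]
      ring_nf
    simp only [this]
    refine Integrable.const_mul ?_ _
    have h := integrable_rpow_mul_exp_neg_mul_sq (b := 2⁻¹) (by norm_num) (s := 2) (by norm_num)
    have heq : (fun x : ℝ => x ^ (2:ℝ) * rexp (-2⁻¹ * x ^ 2))
        = fun x : ℝ => x ^ 2 * rexp (-2⁻¹ * x ^ 2) := by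
      funext x
      rw [show (2:ℝ) = ((2:ℕ) : ℝ) by norm_num, Real.rpow_natCast]
    rw [heq] at h
    exact h
  have h2 := (memLp_map_measure_iff aestronglyMeasurable_id hG.aemeasurable).mp (by rw [hlaw]; exact h1)
  simpa using h2

lemma aux_prod_withDensity {μ ν : Measure ℝ} [SigmaFinite μ] [SigmaFinite ν]
    {f g : ℝ → ℝ≥0∞} (hf : Measurable f) (hg : Measurable g)
    [SigmaFinite (μ.withDensity f)] [SigmaFinite (ν.withDensity g)] :
    (μ.withDensity f).prod (ν.withDensity g)
      = (μ.prod ν).withDensity (fun p => f p.1 * g p.2) := by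
  refine Measure.prod_eq fun s t hs ht => ?_
  rw [withDensity_apply _ (hs.prod ht), ← Measure.prod_restrict,
    lintegral_prod_mul hf.aemeasurable hg.aemeasurable,
    withDensity_apply _ hs, withDensity_apply _ ht]

lemma aux_map_withDensity {α β : Type*} [MeasurableSpace α] [MeasurableSpace β]
    (μ : Measure α) (e : α ≃ᵐ β) {f : α → ℝ≥0∞} (hf : Measurable f) :
    (μ.withDensity f).map e = (μ.map e).withDensity (f ∘ e.symm) := by
  ext s hs
  rw [MeasurableEquiv.map_apply, withDensity_apply _ (e.measurable hs),
    withDensity_apply _ hs, Measure.restrict_map e.measurable hs,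
    lintegral_map (hf.comp e.symm.measurable) e.measurable]
  congr 1
  funext x
  simp

lemma aux_pdf_mul (u v x y : ℝ) (h : u^2 + v^2 = x^2 + y^2) :
    gaussianPDFReal 0 1 u * gaussianPDFReal 0 1 v
      = gaussianPDFReal 0 1 x * gaussianPDFReal 0 1 y := by
  simp only [gaussianPDFReal, sub_zero, NNReal.coe_one, mul_one]
  rw [mul_mul_mul_comm, ← Real.exp_add, mul_mul_mul_comm, ← Real.exp_add]
  congr 1
  rw [← add_div, ← add_div]
  congr 1
  linarith

lemma aux_reflect_mp (a b : ℝ) (hab : a^2 + b^2 = 1) :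
    MeasurePreserving (fun p : ℝ × ℝ => (a*p.1 + b*p.2, b*p.1 - a*p.2))
      ((gaussianReal 0 1).prod (gaussianReal 0 1)) ((gaussianReal 0 1).prod (gaussianReal 0 1)) := by
  have hmeas : Measurable (fun p : ℝ × ℝ => (a*p.1 + b*p.2, b*p.1 - a*p.2)) :=
    ((measurable_fst.const_mul a).add (measurable_snd.const_mul b)).prodMk
      ((measurable_fst.const_mul b).sub (measurable_snd.const_mul a))
  have hinv : ∀ p : ℝ × ℝ, (fun p : ℝ × ℝ => (a*p.1 + b*p.2, b*p.1 - a*p.2))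
      ((fun p : ℝ × ℝ => (a*p.1 + b*p.2, b*p.1 - a*p.2)) p) = p := by
    intro p
    obtain ⟨x, y⟩ := p
    simp only [Prod.mk.injEq]
    constructor
    · linear_combination x * hab
    · linear_combination y * hab
  -- the measurable equiv
  let e : (ℝ × ℝ) ≃ᵐ (ℝ × ℝ) :=
    { toFun := fun p => (a*p.1 + b*p.2, b*p.1 - a*p.2),
      invFun := fun p => (a*p.1 + b*p.2, b*p.1 - a*p.2),
      left_inv := hinv, right_inv := hinv,
      measurable_toFun := hmeas, measurable_invFun := hmeas }
  -- the linear map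
  let T : (ℝ × ℝ) →ₗ[ℝ] (ℝ × ℝ) :=
    { toFun := fun p => (a*p.1 + b*p.2, b*p.1 - a*p.2),
      map_add' := by intro p q; simp only [Prod.fst_add, Prod.snd_add, Prod.mk_add_mk,
        Prod.mk.injEq]; constructor <;> ring
      map_smul' := by intro c p; simp only [Prod.smul_fst, Prod.smul_snd, smul_eq_mul,
        Prod.smul_mk, RingHom.id_apply, Prod.mk.injEq]; constructor <;> ring }
  have hTT : T.comp T = LinearMap.id := by
    refine LinearMap.ext fun p => ?_
    exact hinv p
  have hdet : LinearMap.det T * LinearMap.det T = 1 := by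
    rw [← LinearMap.det_comp, hTT, LinearMap.det_id]
  have hdet0 : LinearMap.det T ≠ 0 := by
    intro h; rw [h, mul_zero] at hdet; exact zero_ne_one hdet
  have habs : |(LinearMap.det T)⁻¹| = 1 := by
    rw [abs_inv]
    have : |LinearMap.det T| = 1 := by nlinarith [abs_nonneg (LinearMap.det T), sq_abs (LinearMap.det T)]
    rw [this]; norm_num
  have hvol : Measure.map (fun p : ℝ × ℝ => (a*p.1 + b*p.2, b*p.1 - a*p.2))
      (volume : Measure (ℝ × ℝ)) = volume := by
    have := Measure.map_linearMap_addHaar_eq_smul_addHaar (volume : Measure (ℝ × ℝ)) hdet0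
    rw [habs, ENNReal.ofReal_one, one_smul] at this
    exact this
  haveI hsf : SigmaFinite ((volume : Measure ℝ).withDensity (gaussianPDF 0 1)) := by
    rw [← gaussianReal_of_var_ne_zero 0 one_ne_zero]; infer_instance
  have hν : (gaussianReal 0 1).prod (gaussianReal 0 1)
      = ((volume : Measure ℝ).prod volume).withDensity
          (fun p => gaussianPDF 0 1 p.1 * gaussianPDF 0 1 p.2) := by
    rw [gaussianReal_of_var_ne_zero 0 one_ne_zero]
    exact aux_prod_withDensity (measurable_gaussianPDF 0 1) (measurable_gaussianPDF 0 1)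
  refine ⟨hmeas, ?_⟩
  have hmap : Measure.map (⇑e) ((gaussianReal 0 1).prod (gaussianReal 0 1))
      = (gaussianReal 0 1).prod (gaussianReal 0 1) := by
    rw [hν, aux_map_withDensity (f := fun p => gaussianPDF 0 1 p.1 * gaussianPDF 0 1 p.2) _ e
      (((measurable_gaussianPDF 0 1).comp measurable_fst).mul
        ((measurable_gaussianPDF 0 1).comp measurable_snd))]
    have h1 : Measure.map (⇑e) ((volume : Measure ℝ).prod volume) = (volume : Measure ℝ).prod volume := by
      rw [← Measure.volume_eq_prod]; exact hvol
    rw [h1]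
    congr 1
    funext p
    show gaussianPDF 0 1 (a*p.1 + b*p.2) * gaussianPDF 0 1 (b*p.1 - a*p.2)
        = gaussianPDF 0 1 p.1 * gaussianPDF 0 1 p.2
    simp only [gaussianPDF]
    rw [← ENNReal.ofReal_mul (gaussianPDFReal_nonneg 0 1 _),
      ← ENNReal.ofReal_mul (gaussianPDFReal_nonneg 0 1 _)]
    congr 1
    exact aux_pdf_mul _ _ _ _ (by linear_combination (p.1^2 + p.2^2) * hab)
  exact hmap
lemma aux_cross (c₁ c₂ : ℝ) (hc : c₁^2 + c₂^2 ≠ 0) {g : ℝ → ℝ}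
    (hint : Integrable (fun p : ℝ × ℝ => (c₁*p.2 - c₂*p.1) * g (c₁*p.1 + c₂*p.2))
      ((gaussianReal 0 1).prod (gaussianReal 0 1))) :
    ∫ p, (c₁*p.2 - c₂*p.1) * g (c₁*p.1 + c₂*p.2)
      ∂((gaussianReal 0 1).prod (gaussianReal 0 1)) = 0 := by
  set ν := (gaussianReal 0 1).prod (gaussianReal 0 1) with hν
  set a : ℝ := (c₁^2 - c₂^2)/(c₁^2 + c₂^2) with ha
  set b : ℝ := (2*c₁*c₂)/(c₁^2 + c₂^2) with hb
  have hab : a^2 + b^2 = 1 := by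
    rw [ha, hb]; rw [div_pow, div_pow, ← add_div, div_eq_one_iff_eq (pow_ne_zero 2 hc)]
    ring
  have hmp := aux_reflect_mp a b hab
  set f := fun p : ℝ × ℝ => (c₁*p.2 - c₂*p.1) * g (c₁*p.1 + c₂*p.2) with hf
  have h1 : ∀ x y : ℝ, c₁*(b*x - a*y) - c₂*(a*x + b*y) = -(c₁*y - c₂*x) := by
    intro x y
    rw [ha, hb]
    field_simp
    ring
  have h2 : ∀ x y : ℝ, c₁*(a*x + b*y) + c₂*(b*x - a*y) = c₁*x + c₂*y := by
    intro x y
    rw [ha, hb]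
    field_simp
    ring
  have hcomp : (fun p : ℝ × ℝ => f ((fun p : ℝ × ℝ => (a*p.1 + b*p.2, b*p.1 - a*p.2)) p))
      = fun p => -(f p) := by
    funext p
    simp only [hf]
    rw [h1 p.1 p.2, h2 p.1 p.2, neg_mul]
  have hmeq : ∫ p, f p ∂ν = ∫ p, f ((fun p : ℝ × ℝ => (a*p.1 + b*p.2, b*p.1 - a*p.2)) p) ∂ν := by
    conv_lhs => rw [hν, ← hmp.map_eq]
    exact integral_map hmp.measurable.aemeasurable
      (by rw [hmp.map_eq]; exact hint.aestronglyMeasurable)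
  rw [hcomp] at hmeq
  rw [integral_neg] at hmeq
  linarith
set_option maxHeartbeats 1600000 in
theorem stmt_1
    {Ω : Type*} [MeasurableSpace Ω] (P : Measure Ω) [IsProbabilityMeasure P]
    (G₁ G₂ : Ω → ℝ) (hG₁ : Measurable G₁) (hG₂ : Measurable G₂)
    (hlaw₁ : P.map G₁ = gaussianReal 0 1) (hlaw₂ : P.map G₂ = gaussianReal 0 1)
    (hindep : IndepFun G₁ G₂ P)
    (σx σy ρ : ℝ) (hσx : 0 < σx) (hσy : 0 < σy)
    (hρ : 0 < ρ ^ 2) (hρ' : ρ ^ 2 < σx ^ 2 * σy ^ 2)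
    (X Y : Ω → ℝ)
    (hX : X = fun ω => σx * G₁ ω)
    (hY : Y = fun ω => (ρ / σx) * G₁ ω + Real.sqrt (σy ^ 2 - ρ ^ 2 / σx ^ 2) * G₂ ω)
    (δ : ℝ) (hδ : 0 < δ)
    (r : ℝ)
    (hr : r = -(δ * σx ^ 2 + σy ^ 2) / (2 * δ * ρ)
        - Real.sqrt ((δ * σx ^ 2 + σy ^ 2) ^ 2 - 4 * δ * ρ ^ 2) / (2 * δ * ρ))
    (γstar : ℝ × ℝ → ℝ) (hγstar : γstar = fun p => p.1 + r * p.2)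
    (Zstar : Ω → ℝ) (hZstar : Zstar = fun ω => γstar (X ω, Y ω))
    (D : ℝ) (hD : D = σx ^ 2 + r ^ 2 * σy ^ 2 + 2 * r * ρ)
    (dXstar dYstar : ℝ → ℝ)
    (hdX : dXstar = fun z => ((σx ^ 2 + r * ρ) / D) * z)
    (hdY : dYstar = fun z => ((ρ + r * σy ^ 2) / D) * z) :
    -- (a) the sender cannot improve by a unilateral deviation
    (∀ γ : ℝ × ℝ → ℝ, Measurable γ →
      MemLp (fun ω => γ (X ω, Y ω)) 2 P →
      (∫ ω, (Y ω - dYstar (γstar (X ω, Y ω))) ^ 2 ∂P)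
        - δ * (∫ ω, (X ω - dXstar (γstar (X ω, Y ω))) ^ 2 ∂P)
      ≤ (∫ ω, (Y ω - dYstar (γ (X ω, Y ω))) ^ 2 ∂P)
        - δ * (∫ ω, (X ω - dXstar (γ (X ω, Y ω))) ^ 2 ∂P)) ∧
    -- (b) the receiver cannot improve by a unilateral deviation
    (∀ dX dY : ℝ → ℝ, Measurable dX → Measurable dY →
      MemLp (fun ω => dX (Zstar ω)) 2 P → MemLp (fun ω => dY (Zstar ω)) 2 P →
      (∫ ω, (X ω - dXstar (Zstar ω)) ^ 2 ∂P) + (∫ ω, (Y ω - dYstar (Zstar ω)) ^ 2 ∂P)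
      ≤ (∫ ω, (X ω - dX (Zstar ω)) ^ 2 ∂P) + (∫ ω, (Y ω - dY (Zstar ω)) ^ 2 ∂P)) := by
  have hσx0 : σx ≠ 0 := ne_of_gt hσx
  have hδ0 : δ ≠ 0 := ne_of_gt hδ
  have hρ0 : ρ ≠ 0 := by intro h; rw [h] at hρ; simp at hρ
  -- discriminant
  have hdiscpos : 0 < (δ * σx ^ 2 + σy ^ 2) ^ 2 - 4 * δ * ρ ^ 2 := by
    nlinarith [sq_nonneg (δ * σx ^ 2 - σy ^ 2), mul_pos hδ (sub_pos.mpr hρ')]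
  set t : ℝ := Real.sqrt ((δ * σx ^ 2 + σy ^ 2) ^ 2 - 4 * δ * ρ ^ 2) with htdef
  have ht2 : t ^ 2 = (δ * σx ^ 2 + σy ^ 2) ^ 2 - 4 * δ * ρ ^ 2 := Real.sq_sqrt hdiscpos.le
  have htpos : 0 < t := Real.sqrt_pos.mpr hdiscpos
  clear_value t
  have hrform : r = -((δ * σx ^ 2 + σy ^ 2 + t) / (2 * δ * ρ)) := by rw [hr]; ring
  have hmul : (2 * δ * ρ) * r = -((δ * σx ^ 2 + σy ^ 2) + t) := by
    rw [hrform]; field_simp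
  have hQ : δ * ρ * r ^ 2 + (δ * σx ^ 2 + σy ^ 2) * r + ρ = 0 := by
    have h4 : (2 * δ * ρ) ^ 2 * (δ * ρ * r ^ 2 + (δ * σx ^ 2 + σy ^ 2) * r + ρ) = 0 := by
      linear_combination (δ * ρ * ((2 * δ * ρ * r) - ((δ * σx ^ 2 + σy ^ 2) + t))
        + 2 * δ * ρ * (δ * σx ^ 2 + σy ^ 2)) * hmul + (δ * ρ) * ht2
    have h5 : (2 * δ * ρ) ^ 2 ≠ 0 := by positivity
    exact (mul_eq_zero.mp h4).resolve_left h5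
  have hr0 : r ≠ 0 := by
    intro h; rw [h] at hQ; simp at hQ; exact hρ0 hQ
  have hδr : 1 < δ * r ^ 2 := by
    have hB : 0 < δ * σx ^ 2 + σy ^ 2 := add_pos (mul_pos hδ (by positivity)) (by positivity)
    have hkey2 : (2 * δ * ρ) ^ 2 * (δ * r ^ 2 - 1)
        = δ * (2 * t * (t + (δ * σx ^ 2 + σy ^ 2))) := by
      linear_combination (δ * ((2 * δ * ρ * r) - ((δ * σx ^ 2 + σy ^ 2) + t))) * hmul + (-δ) * ht2
    have hpos3 : 0 < δ * (2 * t * (t + (δ * σx ^ 2 + σy ^ 2))) :=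
      mul_pos hδ (mul_pos (mul_pos two_pos htpos) (add_pos htpos hB))
    have hpos2 : 0 < (2 * δ * ρ) ^ 2 := by positivity
    nlinarith [hkey2, hpos3, hpos2]
  -- s, c₁, c₂
  have hsnn : 0 ≤ σy ^ 2 - ρ ^ 2 / σx ^ 2 := by
    rw [sub_nonneg, div_le_iff₀ (by positivity)]; nlinarith
  have hspos' : 0 < σy ^ 2 - ρ ^ 2 / σx ^ 2 := by
    rw [sub_pos, div_lt_iff₀ (by positivity)]; nlinarith
  set s : ℝ := Real.sqrt (σy ^ 2 - ρ ^ 2 / σx ^ 2) with hsdef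
  have hs2 : s ^ 2 = σy ^ 2 - ρ ^ 2 / σx ^ 2 := Real.sq_sqrt hsnn
  have hs2' : σx ^ 2 * s ^ 2 = σx ^ 2 * σy ^ 2 - ρ ^ 2 := by
    rw [hs2]; field_simp
  have hspos : 0 < s := Real.sqrt_pos.mpr hspos'
  clear_value s
  set c₁ : ℝ := σx + r * ρ / σx with hc₁def
  set c₂ : ℝ := r * s with hc₂def
  clear_value c₁ c₂
  have hDc : D = c₁ ^ 2 + c₂ ^ 2 := by
    rw [hD, hc₁def, hc₂def]
    field_simp
    linear_combination (-(r ^ 2)) * hs2'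
  have hD0 : 0 < D := by
    rw [hDc]
    have hc₂0 : c₂ ≠ 0 := by rw [hc₂def]; exact mul_ne_zero hr0 (ne_of_gt hspos)
    positivity
  have hcne : c₁ ^ 2 + c₂ ^ 2 ≠ 0 := by rw [← hDc]; exact hD0.ne'
  set aq : ℝ := (σx ^ 2 + r * ρ) / D with haq
  clear_value aq
  have hkey : aq * (1 - δ * r ^ 2) = 1 := by
    have h6 : (σx ^ 2 + r * ρ) * (1 - δ * r ^ 2) = D := by
      rw [hD]; linear_combination (-r) * hQ
    rw [haq, div_mul_eq_mul_div, h6, div_self hD0.ne']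
  have haneg : aq < 0 := by
    have h9 : 1 - δ * r ^ 2 ≤ 0 := by linarith
    by_contra hcon
    push_neg at hcon
    have h10 := mul_le_mul_of_nonneg_left h9 hcon
    rw [mul_zero] at h10
    rw [hkey] at h10
    linarith
  have hbq : (ρ + r * σy ^ 2) / D = -(δ * r * aq) := by
    have h7 : ρ + r * σy ^ 2 = -(δ * r) * (σx ^ 2 + r * ρ) := by linear_combination hQ
    rw [haq, h7]; ring
  -- L² facts
  have hG₁2 := aux_memℒp_gauss P hG₁ hlaw₁
  have hG₂2 := aux_memℒp_gauss P hG₂ hlaw₂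
  have hX2 : MemLp X 2 P := by rw [hX]; exact hG₁2.const_mul σx
  have hY2 : MemLp Y 2 P := by
    rw [hY]; exact ((hG₁2.const_mul _).add (hG₂2.const_mul _))
  have hZ2 : MemLp (fun ω => X ω + r * Y ω) 2 P := hX2.add (hY2.const_mul r)
  -- pointwise quadratic inequality for the sender
  have hpt : ∀ x y z : ℝ, (y - -(δ * r * aq) * (x + r * y)) ^ 2 - δ * (x - aq * (x + r * y)) ^ 2
      ≤ (y - -(δ * r * aq) * z) ^ 2 - δ * (x - aq * z) ^ 2 := by
    intro x y z
    have hdiff : (y - -(δ * r * aq) * z) ^ 2 - δ * (x - aq * z) ^ 2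
        - ((y - -(δ * r * aq) * (x + r * y)) ^ 2 - δ * (x - aq * (x + r * y)) ^ 2)
        = (-(δ * aq)) * (z - (x + r * y)) ^ 2 := by
      linear_combination (-(δ * aq) * (z ^ 2 - (x + r * y) ^ 2)) * hkey
    have hn : 0 ≤ (-(δ * aq)) * (z - (x + r * y)) ^ 2 := by
      rw [show -(δ * aq) = δ * -aq by ring]
      exact mul_nonneg (mul_nonneg hδ.le (neg_nonneg.mpr haneg.le)) (sq_nonneg _)
    linarith [hdiff, hn]
  -- residual representations
  have hXres : ∀ ω, X ω - aq * (X ω + r * Y ω) = (-(σx * c₂ / D)) * (c₁ * G₂ ω - c₂ * G₁ ω) := by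
    intro ω
    simp only [hX, hY]
    rw [haq, hc₁def, hc₂def, hD]
    have hD0' : σx ^ 2 + r ^ 2 * σy ^ 2 + 2 * r * ρ ≠ 0 := by rw [← hD]; exact hD0.ne'
    have h2 : σx ^ 2 + r ^ 2 * σy ^ 2 + r * ρ * 2 ≠ 0 := by contrapose! hD0'; linarith
    field_simp
    linear_combination (-(r ^ 2 * G₁ ω)) * hs2'
  have hYres : ∀ ω, Y ω - -(δ * r * aq) * (X ω + r * Y ω)
      = (s * σx / D) * (c₁ * G₂ ω - c₂ * G₁ ω) := by
    intro ω
    rw [← hbq]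
    simp only [hX, hY]
    rw [hc₁def, hc₂def, hD]
    have hD0' : σx ^ 2 + r ^ 2 * σy ^ 2 + 2 * r * ρ ≠ 0 := by rw [← hD]; exact hD0.ne'
    have h2 : σx ^ 2 + r ^ 2 * σy ^ 2 + ρ * r * 2 ≠ 0 := by contrapose! hD0'; linarith
    field_simp
    linear_combination (G₁ ω * r) * hs2'
  have hZrep : ∀ ω, X ω + r * Y ω = c₁ * G₁ ω + c₂ * G₂ ω := by
    intro ω
    simp only [hX, hY]
    rw [hc₁def, hc₂def]
    field_simp
    ring
  constructor
  · -- part (a)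
    intro γ hγm hγ2
    simp only [hdX, hdY, hγstar, hbq, ← haq]
    have key : ∀ Wf : Ω → ℝ, MemLp Wf 2 P →
        (∫ ω, (Y ω - -(δ * r * aq) * (X ω + r * Y ω)) ^ 2 ∂P)
          - δ * (∫ ω, (X ω - aq * (X ω + r * Y ω)) ^ 2 ∂P)
        ≤ (∫ ω, (Y ω - -(δ * r * aq) * Wf ω) ^ 2 ∂P)
          - δ * (∫ ω, (X ω - aq * Wf ω) ^ 2 ∂P) := by
      intro Wf hW2
      have i1 : Integrable (fun ω => (Y ω - -(δ * r * aq) * (X ω + r * Y ω)) ^ 2) P :=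
        (hY2.sub (hZ2.const_mul _)).integrable_sq
      have i2 : Integrable (fun ω => (X ω - aq * (X ω + r * Y ω)) ^ 2) P :=
        (hX2.sub (hZ2.const_mul aq)).integrable_sq
      have i3 : Integrable (fun ω => (Y ω - -(δ * r * aq) * Wf ω) ^ 2) P :=
        (hY2.sub (hW2.const_mul _)).integrable_sq
      have i4 : Integrable (fun ω => (X ω - aq * Wf ω) ^ 2) P :=
        (hX2.sub (hW2.const_mul aq)).integrable_sq
      have e1 : (∫ ω, (Y ω - -(δ * r * aq) * (X ω + r * Y ω)) ^ 2 ∂P)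
          - δ * (∫ ω, (X ω - aq * (X ω + r * Y ω)) ^ 2 ∂P)
          = ∫ ω, ((Y ω - -(δ * r * aq) * (X ω + r * Y ω)) ^ 2
              - δ * (X ω - aq * (X ω + r * Y ω)) ^ 2) ∂P := by
        rw [integral_sub i1 (i2.const_mul δ), integral_const_mul]
      have e2 : (∫ ω, (Y ω - -(δ * r * aq) * Wf ω) ^ 2 ∂P)
          - δ * (∫ ω, (X ω - aq * Wf ω) ^ 2 ∂P)
          = ∫ ω, ((Y ω - -(δ * r * aq) * Wf ω) ^ 2 - δ * (X ω - aq * Wf ω) ^ 2) ∂P := by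
        rw [integral_sub i3 (i4.const_mul δ), integral_const_mul]
      rw [e1, e2]
      exact integral_mono (i1.sub (i2.const_mul δ)) (i3.sub (i4.const_mul δ))
        fun ω => hpt (X ω) (Y ω) (Wf ω)
    exact key _ hγ2
  · -- part (b)
    intro dX dY hdXm hdYm hdX2 hdY2
    simp only [hdX, hdY, hγstar, hZstar, hbq, ← haq] at hdX2 hdY2 ⊢
    -- the cross-term lemma
    have hcross : ∀ h : ℝ → ℝ, Measurable h → MemLp (fun ω => h (X ω + r * Y ω)) 2 P →
        ∫ ω, (c₁ * G₂ ω - c₂ * G₁ ω) * h (X ω + r * Y ω) ∂P = 0 := by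
      intro h hm hh2
      have hFm : Measurable (fun p : ℝ × ℝ => (c₁ * p.2 - c₂ * p.1) * h (c₁ * p.1 + c₂ * p.2)) :=
        ((measurable_snd.const_mul c₁).sub (measurable_fst.const_mul c₂)).mul
          (hm.comp ((measurable_fst.const_mul c₁).add (measurable_snd.const_mul c₂)))
      simp only [hZrep] at hh2 ⊢
      have hVW2 : MemLp (fun ω => c₁ * G₂ ω - c₂ * G₁ ω) 2 P :=
        (hG₂2.const_mul c₁).sub (hG₁2.const_mul c₂)
      have hPint : Integrable (fun ω => (c₁ * G₂ ω - c₂ * G₁ ω) * h (c₁ * G₁ ω + c₂ * G₂ ω)) P :=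
        aux_mul_int hVW2 hh2
      have hjoint : P.map (fun ω => (G₁ ω, G₂ ω)) = (gaussianReal 0 1).prod (gaussianReal 0 1) := by
        have hj := (indepFun_iff_map_prod_eq_prod_map_map hG₁.aemeasurable hG₂.aemeasurable).mp hindep
        rw [hlaw₁, hlaw₂] at hj
        exact hj
      have hFint : Integrable (fun p : ℝ × ℝ => (c₁ * p.2 - c₂ * p.1) * h (c₁ * p.1 + c₂ * p.2))
          ((gaussianReal 0 1).prod (gaussianReal 0 1)) := by
        rw [← hjoint]
        exact (integrable_map_measure hFm.aestronglyMeasurable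
          (hG₁.prodMk hG₂).aemeasurable).mpr hPint
      have h1 : ∫ ω, (c₁ * G₂ ω - c₂ * G₁ ω) * h (c₁ * G₁ ω + c₂ * G₂ ω) ∂P
          = ∫ p : ℝ × ℝ, (c₁ * p.2 - c₂ * p.1) * h (c₁ * p.1 + c₂ * p.2)
              ∂((gaussianReal 0 1).prod (gaussianReal 0 1)) := by
        rw [← hjoint, integral_map (hG₁.prodMk hG₂).aemeasurable hFm.aestronglyMeasurable]
      rw [h1]
      exact aux_cross c₁ c₂ hcne hFint
    -- X part
    have hXle : (∫ ω, (X ω - aq * (X ω + r * Y ω)) ^ 2 ∂P)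
        ≤ ∫ ω, (X ω - dX (X ω + r * Y ω)) ^ 2 ∂P := by
      set h : ℝ → ℝ := fun z => aq * z - dX z with hhdef
      have hm : Measurable h := (measurable_id.const_mul aq).sub hdXm
      have hh2 : MemLp (fun ω => h (X ω + r * Y ω)) 2 P := (hZ2.const_mul aq).sub hdX2
      have hres2 : MemLp (fun ω => X ω - aq * (X ω + r * Y ω)) 2 P := hX2.sub (hZ2.const_mul aq)
      have hcr := hcross h hm hh2
      have hcrX : ∫ ω, (X ω - aq * (X ω + r * Y ω)) * h (X ω + r * Y ω) ∂P = 0 := by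
        have heq : ∀ ω, (X ω - aq * (X ω + r * Y ω)) * h (X ω + r * Y ω)
            = (-(σx * c₂ / D)) * ((c₁ * G₂ ω - c₂ * G₁ ω) * h (X ω + r * Y ω)) := fun ω => by
          rw [hXres ω]; ring
        rw [integral_congr_ae (Filter.Eventually.of_forall heq), integral_const_mul, hcr, mul_zero]
      have hexp : ∀ ω, (X ω - dX (X ω + r * Y ω)) ^ 2
          = (X ω - aq * (X ω + r * Y ω)) ^ 2
            + (2 * ((X ω - aq * (X ω + r * Y ω)) * h (X ω + r * Y ω))
              + (h (X ω + r * Y ω)) ^ 2) := fun ω => by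
        simp only [hhdef]; ring
      have i5 : Integrable (fun ω => (X ω - aq * (X ω + r * Y ω)) ^ 2) P := hres2.integrable_sq
      have i6 : Integrable (fun ω => (X ω - aq * (X ω + r * Y ω)) * h (X ω + r * Y ω)) P :=
        aux_mul_int hres2 hh2
      have i7 : Integrable (fun ω => (h (X ω + r * Y ω)) ^ 2) P := hh2.integrable_sq
      have i8 : Integrable (fun ω => 2 * ((X ω - aq * (X ω + r * Y ω)) * h (X ω + r * Y ω))
          + (h (X ω + r * Y ω)) ^ 2) P := (i6.const_mul 2).add i7
      have e3 : ∫ ω, (X ω - dX (X ω + r * Y ω)) ^ 2 ∂P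
          = (∫ ω, (X ω - aq * (X ω + r * Y ω)) ^ 2 ∂P)
            + (2 * (∫ ω, (X ω - aq * (X ω + r * Y ω)) * h (X ω + r * Y ω) ∂P)
              + ∫ ω, (h (X ω + r * Y ω)) ^ 2 ∂P) := by
        rw [integral_congr_ae (Filter.Eventually.of_forall hexp),
          integral_add i5 i8, integral_add (i6.const_mul 2) i7,
          integral_const_mul]
      have h8 : 0 ≤ ∫ ω, (h (X ω + r * Y ω)) ^ 2 ∂P := integral_nonneg fun ω => sq_nonneg _
      rw [e3, hcrX]
      linarith
    -- Y part
    have hYle : (∫ ω, (Y ω - -(δ * r * aq) * (X ω + r * Y ω)) ^ 2 ∂P)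
        ≤ ∫ ω, (Y ω - dY (X ω + r * Y ω)) ^ 2 ∂P := by
      set h : ℝ → ℝ := fun z => -(δ * r * aq) * z - dY z with hhdef
      have hm : Measurable h := (measurable_id.const_mul _).sub hdYm
      have hh2 : MemLp (fun ω => h (X ω + r * Y ω)) 2 P := (hZ2.const_mul _).sub hdY2
      have hres2 : MemLp (fun ω => Y ω - -(δ * r * aq) * (X ω + r * Y ω)) 2 P :=
        hY2.sub (hZ2.const_mul _)
      have hcr := hcross h hm hh2
      have hcrY : ∫ ω, (Y ω - -(δ * r * aq) * (X ω + r * Y ω)) * h (X ω + r * Y ω) ∂P = 0 := by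
        have heq : ∀ ω, (Y ω - -(δ * r * aq) * (X ω + r * Y ω)) * h (X ω + r * Y ω)
            = (s * σx / D) * ((c₁ * G₂ ω - c₂ * G₁ ω) * h (X ω + r * Y ω)) := fun ω => by
          rw [hYres ω]; ring
        rw [integral_congr_ae (Filter.Eventually.of_forall heq), integral_const_mul, hcr, mul_zero]
      have hexp : ∀ ω, (Y ω - dY (X ω + r * Y ω)) ^ 2
          = (Y ω - -(δ * r * aq) * (X ω + r * Y ω)) ^ 2
            + (2 * ((Y ω - -(δ * r * aq) * (X ω + r * Y ω)) * h (X ω + r * Y ω))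
              + (h (X ω + r * Y ω)) ^ 2) := fun ω => by
        simp only [hhdef]; ring
      have i5 : Integrable (fun ω => (Y ω - -(δ * r * aq) * (X ω + r * Y ω)) ^ 2) P :=
        hres2.integrable_sq
      have i6 : Integrable (fun ω => (Y ω - -(δ * r * aq) * (X ω + r * Y ω)) * h (X ω + r * Y ω)) P :=
        aux_mul_int hres2 hh2
      have i7 : Integrable (fun ω => (h (X ω + r * Y ω)) ^ 2) P := hh2.integrable_sq
      have i8 : Integrable (fun ω => 2 * ((Y ω - -(δ * r * aq) * (X ω + r * Y ω)) * h (X ω + r * Y ω))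
          + (h (X ω + r * Y ω)) ^ 2) P := (i6.const_mul 2).add i7
      have e3 : ∫ ω, (Y ω - dY (X ω + r * Y ω)) ^ 2 ∂P
          = (∫ ω, (Y ω - -(δ * r * aq) * (X ω + r * Y ω)) ^ 2 ∂P)
            + (2 * (∫ ω, (Y ω - -(δ * r * aq) * (X ω + r * Y ω)) * h (X ω + r * Y ω) ∂P)
              + ∫ ω, (h (X ω + r * Y ω)) ^ 2 ∂P) := by
        rw [integral_congr_ae (Filter.Eventually.of_forall hexp),
          integral_add i5 i8, integral_add (i6.const_mul 2) i7,
          integral_const_mul]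
      have h8 : 0 ≤ ∫ ω, (h (X ω + r * Y ω)) ^ 2 ∂P := integral_nonneg fun ω => sq_nonneg _
      rw [e3, hcrY]
      linarith
    exact add_le_add hXle hYle
end

section
/- Let σx, σy > 0, ρ ∈ ℝ with ρ ≠ 0 and ρ² < σx²·σy², and δ > 0. Let D = [[−δσx², ρ],[−δρ, σy²]], let λ₁ = (−δσx² + σy²)/2 + √((δσx² + σy²)² − 4δρ²)/2, and let r = −(δσx² + σy²)/(2δρ) − √((δσx² + σy²)² − 4δρ²)/(2δρ). Then the vector v = (1, r) is a left eigenvector of D associated with λ₁; that is, vᵀ D = λ₁ · vᵀ (equivalently, Dᵀ v = λ₁ · v). -/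
open Matrix

theorem stmt_7
    (σx σy ρ δ : ℝ) (hσx : 0 < σx) (hσy : 0 < σy)
    (hρ : ρ ≠ 0) (hρ' : ρ ^ 2 < σx ^ 2 * σy ^ 2) (hδ : 0 < δ)
    (D : Matrix (Fin 2) (Fin 2) ℝ)
    (hD : D = !![-δ * σx ^ 2, ρ; -δ * ρ, σy ^ 2])
    (lam₁ : ℝ)
    (hlam₁ : lam₁ = (-δ * σx ^ 2 + σy ^ 2) / 2
        + Real.sqrt ((δ * σx ^ 2 + σy ^ 2) ^ 2 - 4 * δ * ρ ^ 2) / 2)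
    (r : ℝ)
    (hr : r = -(δ * σx ^ 2 + σy ^ 2) / (2 * δ * ρ)
        - Real.sqrt ((δ * σx ^ 2 + σy ^ 2) ^ 2 - 4 * δ * ρ ^ 2) / (2 * δ * ρ))
    (v : Fin 2 → ℝ) (hv : v = ![1, r]) :
    Matrix.vecMul v D = lam₁ • v ∧ Dᵀ.mulVec v = lam₁ • v := by
  have hnn : (0:ℝ) ≤ (δ * σx ^ 2 + σy ^ 2) ^ 2 - 4 * δ * ρ ^ 2 := by
    nlinarith [sq_nonneg (δ * σx ^ 2 - σy ^ 2), hδ.le, sq_nonneg ρ]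
  set s := Real.sqrt ((δ * σx ^ 2 + σy ^ 2) ^ 2 - 4 * δ * ρ ^ 2) with hsdef
  have hs : s ^ 2 = (δ * σx ^ 2 + σy ^ 2) ^ 2 - 4 * δ * ρ ^ 2 := Real.sq_sqrt hnn
  have hδρ : δ * ρ ≠ 0 := mul_ne_zero hδ.ne' hρ
  subst hD hlam₁ hr hv
  have h1 : Matrix.vecMul ![(1:ℝ), -(δ * σx ^ 2 + σy ^ 2) / (2 * δ * ρ) - s / (2 * δ * ρ)]
      !![-δ * σx ^ 2, ρ; -δ * ρ, σy ^ 2]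
      = ((-δ * σx ^ 2 + σy ^ 2) / 2 + s / 2) •
        ![(1:ℝ), -(δ * σx ^ 2 + σy ^ 2) / (2 * δ * ρ) - s / (2 * δ * ρ)] := by
    funext i
    fin_cases i
    · simp [Matrix.vecMul, dotProduct, Fin.sum_univ_two]
      field_simp
      ring
    · simp [Matrix.vecMul, dotProduct, Fin.sum_univ_two]
      field_simp
      linear_combination hs
  exact ⟨h1, by rw [Matrix.mulVec_transpose]; exact h1⟩
end

section
/- Let σx, σy > 0 and ρ ≠ 0. Define for δ > 0 the function r(δ) = −(δσx² + σy²)/(2δρ) − √((δσx² + σy²)² − 4δρ²)/(2δρ). Then r(δ) tends to −σx²/ρ as δ → ∞; i.e., in the high-privacy regime the equilibrium encoder coefficient ratio B/A converges to −σx²/ρ, making the revealed message essentially uncorrelated with the private parameter. -/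
open Filter

theorem stmt_8
    (σx σy ρ : ℝ) (hσx : 0 < σx) (hσy : 0 < σy) (hρ : ρ ≠ 0)
    (r : ℝ → ℝ)
    (hr : r = fun δ => -(δ * σx ^ 2 + σy ^ 2) / (2 * δ * ρ)
        - Real.sqrt ((δ * σx ^ 2 + σy ^ 2) ^ 2 - 4 * δ * ρ ^ 2) / (2 * δ * ρ)) :
    Tendsto r atTop (nhds (-σx ^ 2 / ρ)) := by
  subst hr
  set g : ℝ → ℝ := fun t => -(σx ^ 2 + σy ^ 2 * t) / (2 * ρ)
      - Real.sqrt ((σx ^ 2 + σy ^ 2 * t) ^ 2 - 4 * ρ ^ 2 * t) / (2 * ρ) with hg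
  have hcont : ContinuousAt g 0 := by
    apply ContinuousAt.sub
    · fun_prop
    · exact ContinuousAt.div
        (Real.continuous_sqrt.continuousAt.comp (by fun_prop)) continuousAt_const
        (by positivity)
  have hg0 : g 0 = -σx ^ 2 / ρ := by
    simp only [hg, mul_zero, add_zero, sub_zero]
    rw [Real.sqrt_sq (sq_nonneg σx)]
    field_simp
    ring
  have hcomp : Tendsto (fun δ : ℝ => g δ⁻¹) atTop (nhds (-σx ^ 2 / ρ)) := by
    rw [← hg0]
    exact hcont.tendsto.comp tendsto_inv_atTop_zero
  refine Tendsto.congr' ?_ hcomp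
  filter_upwards [eventually_gt_atTop (0 : ℝ)] with δ hδ
  have hδ' : δ ≠ 0 := hδ.ne'
  simp only [hg]
  have key : (σx ^ 2 + σy ^ 2 * δ⁻¹) ^ 2 - 4 * ρ ^ 2 * δ⁻¹
      = (δ⁻¹) ^ 2 * ((δ * σx ^ 2 + σy ^ 2) ^ 2 - 4 * δ * ρ ^ 2) := by
    field_simp
  rw [key, Real.sqrt_mul (by positivity), Real.sqrt_sq (by positivity)]
  field_simp
end

section
/- Let σx, σy > 0 and ρ ≠ 0 with ρ² < σx²·σy². Define for δ > 0 the function r(δ) = −(δσx² + σy²)/(2δρ) − √((δσx² + σy²)² − 4δρ²)/(2δρ). Then 1/r(δ) tends to 0 as δ → 0⁺; i.e., the equilibrium encoder coefficient ratio A/B converges to 0 as the privacy concern vanishes, so in the limit the encoder transmits Y directly. -/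
open Filter

theorem stmt_9
    (σx σy ρ : ℝ) (hσx : 0 < σx) (hσy : 0 < σy) (hρ : ρ ≠ 0)
    (hρ' : ρ ^ 2 < σx ^ 2 * σy ^ 2)
    (r : ℝ → ℝ)
    (hr : r = fun δ => -(δ * σx ^ 2 + σy ^ 2) / (2 * δ * ρ)
        - Real.sqrt ((δ * σx ^ 2 + σy ^ 2) ^ 2 - 4 * δ * ρ ^ 2) / (2 * δ * ρ)) :
    Tendsto (fun δ => 1 / r δ) (nhdsWithin 0 (Set.Ioi 0)) (nhds 0) := by
  set N : ℝ → ℝ := fun δ => δ * σx ^ 2 + σy ^ 2 with hN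
  set S : ℝ → ℝ := fun δ => Real.sqrt ((δ * σx ^ 2 + σy ^ 2) ^ 2 - 4 * δ * ρ ^ 2) with hS
  have hden : Tendsto (fun δ => N δ + S δ) (nhdsWithin 0 (Set.Ioi 0)) (nhds (2 * σy ^ 2)) := by
    have hc : Continuous (fun δ => N δ + S δ) := by
      simp only [hN, hS]
      exact (by fun_prop : Continuous fun δ : ℝ => δ * σx ^ 2 + σy ^ 2).add
        (Real.continuous_sqrt.comp
          (by fun_prop : Continuous fun δ : ℝ => (δ * σx ^ 2 + σy ^ 2) ^ 2 - 4 * δ * ρ ^ 2))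
    have h0 : N 0 + S 0 = 2 * σy ^ 2 := by
      simp only [hN, hS]
      norm_num
      rw [Real.sqrt_sq (by positivity)]
      ring
    have := hc.tendsto 0
    rw [h0] at this
    exact this.mono_left nhdsWithin_le_nhds
  have hnum : Tendsto (fun δ : ℝ => -(2 * δ * ρ)) (nhdsWithin 0 (Set.Ioi 0)) (nhds 0) := by
    have hc : Continuous (fun δ : ℝ => -(2 * δ * ρ)) := by fun_prop
    have := hc.tendsto 0
    simp only [mul_zero, zero_mul, neg_zero] at this
    exact this.mono_left nhdsWithin_le_nhds
  have hdiv := hnum.div hden (by positivity)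
  have hlim : Tendsto (fun δ => -(2 * δ * ρ) / (N δ + S δ)) (nhdsWithin 0 (Set.Ioi 0)) (nhds 0) := by
    simpa [Pi.div_def] using hdiv
  refine hlim.congr' ?_
  filter_upwards [self_mem_nhdsWithin] with δ hδ
  have hδ0 : (0:ℝ) < δ := hδ
  have hS0 : 0 ≤ S δ := Real.sqrt_nonneg _
  have hN0 : 0 < N δ := by simp only [hN]; positivity
  have hNS : N δ + S δ ≠ 0 := by positivity
  have hrδ : r δ = -(N δ + S δ) / (2 * δ * ρ) := by
    rw [hr]
    simp only [hN, hS]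
    ring
  rw [hrδ]
  rw [one_div, inv_div, div_neg, ← neg_div]
end

section
/- Consider the scalar MMSE Gaussian information bottleneck problem with privacy parameter δ > 0: the sender observes only X and chooses a measurable map γ : ℝ → ℝ, producing Z = γ(X), and the sender's cost is F(γ) = E[(Y − E[Y | σ(Z)])²] − δ·E[(X − E[X | σ(Z)])²]. Then: (i) if ρ² > δ·σx⁴, the identity encoder γ = id is optimal, i.e., F(id) ≤ F(γ) for every measurable γ : ℝ → ℝ; and (ii) if ρ² < δ·σx⁴, the noninformative constant encoder γ ≡ 0 is optimal, i.e., F(0) ≤ F(γ) for every measurable γ : ℝ → ℝ. -/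
open MeasureTheory ProbabilityTheory Real

lemma my_integrable_mul {Ω : Type*} {mΩ : MeasurableSpace Ω} {P : Measure Ω}
    {f g : Ω → ℝ} (hf : MemLp f 2 P) (hg : MemLp g 2 P) :
    Integrable (fun ω => f ω * g ω) P := by
  have hint : Integrable (fun ω => (f ω ^ 2 + g ω ^ 2) / 2) P :=
    (hf.integrable_sq.add hg.integrable_sq).div_const 2
  refine hint.mono' (hf.1.mul hg.1) (ae_of_all _ fun ω => ?_)
  rw [Real.norm_eq_abs, abs_mul]
  nlinarith [sq_nonneg (|f ω| - |g ω|), sq_abs (f ω), sq_abs (g ω),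
    abs_nonneg (f ω), abs_nonneg (g ω)]

lemma my_memℒp_condexp {Ω : Type*} {m m0 : MeasurableSpace Ω}
    {P : Measure Ω} [IsProbabilityMeasure P] (hm : m ≤ m0)
    {f : Ω → ℝ} (hf : MemLp f 2 P) : MemLp (P[f|m]) 2 P := by
  set gL : lpMeas ℝ ℝ m 2 P := condExpL2 (m0 := m0) (μ := P) ℝ ℝ hm (hf.toLp f) with hgL
  have hae : ((gL : Ω →₂[P] ℝ) : Ω → ℝ) =ᵐ[P] P[f|m] := by
    refine ae_eq_condExp_of_forall_setIntegral_eq hm (hf.integrable one_le_two)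
      (fun s _ hμs => integrableOn_condExpL2_of_measure_ne_top hm hμs.ne _)
      (fun s hs hμs => ?_) (aestronglyMeasurable_condExpL2 hm _)
    rw [integral_condExpL2_eq hm _ hs hμs.ne]
    exact setIntegral_congr_ae (hm s hs) (hf.coeFn_toLp.mono fun x hx _ => hx)
  exact (Lp.memLp (gL : Ω →₂[P] ℝ)).ae_eq hae

lemma my_gaussian_memℒp {Ω : Type*} [MeasurableSpace Ω] {P : Measure Ω}
    {G : Ω → ℝ} (hG : Measurable G) (hlaw : P.map G = gaussianReal 0 1) :
    MemLp G 2 P := by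
  have h1 : MemLp (id : ℝ → ℝ) 2 (gaussianReal 0 1) := by
    rw [memLp_two_iff_integrable_sq aestronglyMeasurable_id]
    have hgauss : Integrable (fun x : ℝ =>
        (Real.sqrt (2 * Real.pi))⁻¹ * (x ^ (2:ℝ) * Real.exp (-(1/2) * x ^ 2))) := by
      exact (integrable_rpow_mul_exp_neg_mul_sq (by norm_num : (0:ℝ) < 1/2)
        (by norm_num : (-1:ℝ) < 2)).const_mul _
    rw [gaussianReal_of_var_ne_zero 0 one_ne_zero,
      integrable_withDensity_iff (measurable_gaussianPDF 0 1)
        (ae_of_all _ fun x => ENNReal.ofReal_lt_top)]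
    refine hgauss.congr (ae_of_all _ fun x => ?_)
    have h2 : (x : ℝ) ^ (2:ℝ) = x ^ 2 := by
      rw [show (2:ℝ) = ((2:ℕ):ℝ) by norm_num, Real.rpow_natCast]
    rw [gaussianPDF_def]
    simp only [gaussianPDFReal, NNReal.coe_one, mul_one, sub_zero, id_eq]
    rw [ENNReal.toReal_ofReal (by positivity), h2]
    rw [show -x^2/2 = -(1/2) * x^2 by ring]
    ring
  have := (memLp_map_measure_iff (aestronglyMeasurable_id) hG.aemeasurable).mp
    (by rw [hlaw]; exact h1)
  exact this

theorem stmt_14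
    {Ω : Type*} [MeasurableSpace Ω] (P : Measure Ω) [IsProbabilityMeasure P]
    (G₁ G₂ : Ω → ℝ) (hG₁ : Measurable G₁) (hG₂ : Measurable G₂)
    (hlaw₁ : P.map G₁ = gaussianReal 0 1) (hlaw₂ : P.map G₂ = gaussianReal 0 1)
    (hindep : IndepFun G₁ G₂ P)
    (σx σy ρ : ℝ) (hσx : 0 < σx) (hσy : 0 < σy)
    (hρ : 0 < ρ ^ 2) (hρ' : ρ ^ 2 < σx ^ 2 * σy ^ 2)
    (X Y : Ω → ℝ)
    (hX : X = fun ω => σx * G₁ ω)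
    (hY : Y = fun ω => (ρ / σx) * G₁ ω + Real.sqrt (σy ^ 2 - ρ ^ 2 / σx ^ 2) * G₂ ω)
    (δ : ℝ) (hδ : 0 < δ)
    (F : (ℝ → ℝ) → ℝ)
    (hF : F = fun γ =>
      (∫ ω, (Y ω - (P[Y | MeasurableSpace.comap (fun ω => γ (X ω)) Real.measurableSpace]) ω) ^ 2 ∂P)
      - δ * ∫ ω, (X ω - (P[X | MeasurableSpace.comap (fun ω => γ (X ω)) Real.measurableSpace]) ω) ^ 2 ∂P) :
    (δ * σx ^ 4 < ρ ^ 2 →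
      ∀ γ : ℝ → ℝ, Measurable γ → F (fun x => x) ≤ F γ) ∧
    (ρ ^ 2 < δ * σx ^ 4 →
      ∀ γ : ℝ → ℝ, Measurable γ → F (fun _ => 0) ≤ F γ) := by
  have hσx0 : σx ≠ 0 := ne_of_gt hσx
  have hG1L2 : MemLp G₁ 2 P := my_gaussian_memℒp hG₁ hlaw₁
  have hG2L2 : MemLp G₂ 2 P := my_gaussian_memℒp hG₂ hlaw₂
  set a : ℝ := ρ / σx ^ 2 with ha
  set c : ℝ := Real.sqrt (σy ^ 2 - ρ ^ 2 / σx ^ 2) with hc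
  set N : Ω → ℝ := fun ω => c * G₂ ω with hN
  set ν : ℝ := ∫ ω, N ω ∂P with hν
  have hXmeas : Measurable X := by rw [hX]; exact hG₁.const_mul σx
  have hX2 : MemLp X 2 P := by rw [hX]; exact hG1L2.const_mul σx
  have hN2 : MemLp N 2 P := hG2L2.const_mul c
  have hIX : Integrable X P := hX2.integrable one_le_two
  have hIN : Integrable N P := hN2.integrable one_le_two
  have hYsum : Y = fun ω => a * X ω + N ω := by
    rw [hY, hX, hN, ha]
    funext ω
    field_simp
  have hindepσ : Indep (MeasurableSpace.comap G₁ Real.measurableSpace)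
      (MeasurableSpace.comap G₂ Real.measurableSpace) P :=
    (IndepFun_iff_Indep _ _ _).mp hindep
  have hXcm : Measurable[MeasurableSpace.comap G₁ Real.measurableSpace] X := by
    rw [hX]; exact (Measurable.of_comap_le le_rfl).const_mul σx
  have hNcm : Measurable[MeasurableSpace.comap G₂ Real.measurableSpace] N :=
    (Measurable.of_comap_le le_rfl).const_mul c
  -- the key identity and the projection bound
  have key : ∀ γ : ℝ → ℝ, Measurable γ →
      ((∫ ω, (Y ω - (P[Y | MeasurableSpace.comap (fun ω => γ (X ω)) Real.measurableSpace]) ω) ^ 2 ∂P)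
        - δ * ∫ ω, (X ω - (P[X | MeasurableSpace.comap (fun ω => γ (X ω)) Real.measurableSpace]) ω) ^ 2 ∂P
        = (ρ ^ 2 / σx ^ 4 - δ) *
            (∫ ω, (X ω - (P[X | MeasurableSpace.comap (fun ω => γ (X ω)) Real.measurableSpace]) ω) ^ 2 ∂P)
          + ∫ ω, (N ω - ν) ^ 2 ∂P) ∧
      (0 ≤ ∫ ω, (X ω - (P[X | MeasurableSpace.comap (fun ω => γ (X ω)) Real.measurableSpace]) ω) ^ 2 ∂P) ∧
      (∫ ω, (X ω - (P[X | MeasurableSpace.comap (fun ω => γ (X ω)) Real.measurableSpace]) ω) ^ 2 ∂P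
        ≤ ∫ ω, (X ω - ∫ x, X x ∂P) ^ 2 ∂P) := by
    intro γ hγ
    set m := MeasurableSpace.comap (fun ω => γ (X ω)) Real.measurableSpace with hmdef
    have hcomp : (fun ω => γ (X ω)) = (fun t => γ (σx * t)) ∘ G₁ := by
      rw [hX]; funext ω; rfl
    have hmG1 : m ≤ MeasurableSpace.comap G₁ Real.measurableSpace := by
      rw [hmdef, hcomp, ← MeasurableSpace.comap_comp]
      exact MeasurableSpace.comap_mono (hγ.comp (measurable_const_mul σx)).comap_le
    have hm := hmG1.trans hG₁.comap_le
    haveI : SigmaFinite (P.trim hm) := inferInstance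
    set E : Ω → ℝ := P[X|m] with hE
    have hE2 : MemLp E 2 P := my_memℒp_condexp hm hX2
    have hIE : Integrable E P := integrable_condExp
    have hEsm : StronglyMeasurable[m] E := stronglyMeasurable_condExp
    have hNsm : StronglyMeasurable[MeasurableSpace.comap G₂ Real.measurableSpace] N :=
      hNcm.stronglyMeasurable
    have hIndep2 : Indep (MeasurableSpace.comap G₂ Real.measurableSpace) m P := by
      rw [Indep_iff]
      intro t1 t2 h1 h2
      exact (Indep_iff _ _ _).mp hindepσ.symm t1 t2 h1 (hmG1 t2 h2)
    have hEN : P[N|m] =ᵐ[P] fun _ => ν := by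
      rw [hν]
      exact condExp_indep_eq hG₂.comap_le hm hNsm hIndep2
    have hIaX : Integrable (fun ω => a * X ω) P := hIX.const_mul a
    have hadd : P[Y|m] =ᵐ[P] P[fun ω => a * X ω|m] + P[N|m] := by
      rw [hYsum]
      exact condExp_add (f := fun ω => a * X ω) (g := N) hIaX hIN m
    have hsmul : P[fun ω => a * X ω|m] =ᵐ[P] fun ω => a * E ω := by
      have h := condExp_smul (m := m) (μ := P) a X
      exact h.mono fun ω hω => hω
    have hEY : P[Y|m] =ᵐ[P] fun ω => a * E ω + ν := by
      filter_upwards [hadd, hsmul, hEN] with ω h1 h2 h3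
      rw [h1, Pi.add_apply, h2, h3]
    -- integrability of residuals
    have hu2 : MemLp (fun ω => X ω - E ω) 2 P := hX2.sub hE2
    have hv2 : MemLp (fun ω => N ω - ν) 2 P := hN2.sub (memLp_const ν)
    have hIu : Integrable (fun ω => X ω - E ω) P := hu2.integrable one_le_two
    have hIv : Integrable (fun ω => N ω - ν) P := hv2.integrable one_le_two
    have hIu2 : Integrable (fun ω => (X ω - E ω) ^ 2) P := hu2.integrable_sq
    have hIv2 : Integrable (fun ω => (N ω - ν) ^ 2) P := hv2.integrable_sq
    have hIuv : Integrable (fun ω => (X ω - E ω) * (N ω - ν)) P := my_integrable_mul hu2 hv2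
    -- cross term is zero
    have hucm : Measurable[MeasurableSpace.comap G₁ Real.measurableSpace]
        (fun ω => X ω - E ω) := hXcm.sub (hEsm.mono hmG1).measurable
    have hvcm : Measurable[MeasurableSpace.comap G₂ Real.measurableSpace]
        (fun ω => N ω - ν) := hNcm.sub measurable_const
    have huv_indep : IndepFun (fun ω => X ω - E ω) (fun ω => N ω - ν) P := by
      rw [IndepFun_iff]
      intro t1 t2 h1 h2
      exact (Indep_iff _ _ _).mp hindepσ t1 t2 (hucm.comap_le t1 h1) (hvcm.comap_le t2 h2)
    have hIu_int : ∫ ω, (X ω - E ω) ∂P = 0 := by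
      rw [integral_sub hIX hIE, hE, integral_condExp hm, sub_self]
    have hcross : ∫ ω, (X ω - E ω) * (N ω - ν) ∂P = 0 := by
      have h := huv_indep.integral_mul_eq_mul_integral hIu.1 hIv.1
      have h2 : ∫ ω, (X ω - E ω) * (N ω - ν) ∂P
          = integral P ((fun ω => X ω - E ω) * (fun ω => N ω - ν)) := rfl
      rw [h2, h, hIu_int, zero_mul]
    -- expand the Y-residual
    have hYres : (fun ω => (Y ω - (P[Y|m]) ω) ^ 2) =ᵐ[P]
        fun ω => a ^ 2 * (X ω - E ω) ^ 2
          + (2 * a * ((X ω - E ω) * (N ω - ν)) + (N ω - ν) ^ 2) := by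
      filter_upwards [hEY] with ω hω
      have h4 : Y ω = a * X ω + N ω := by rw [hYsum]
      rw [hω, h4]
      ring
    have hYint : ∫ ω, (Y ω - (P[Y|m]) ω) ^ 2 ∂P
        = a ^ 2 * (∫ ω, (X ω - E ω) ^ 2 ∂P) + ∫ ω, (N ω - ν) ^ 2 ∂P := by
      have hI2 : Integrable (fun ω => 2 * a * ((X ω - E ω) * (N ω - ν))) P :=
        hIuv.const_mul (2 * a)
      have hI23 : Integrable
          (fun ω => 2 * a * ((X ω - E ω) * (N ω - ν)) + (N ω - ν) ^ 2) P := hI2.add hIv2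
      rw [integral_congr_ae hYres, integral_add (hIu2.const_mul (a ^ 2)) hI23,
        integral_add hI2 hIv2, integral_const_mul, integral_const_mul, hcross]
      ring
    have ha2 : a ^ 2 = ρ ^ 2 / σx ^ 4 := by
      rw [ha, div_pow]
      norm_num [← pow_mul]
    refine ⟨by rw [hYint, ha2]; ring, integral_nonneg fun ω => sq_nonneg _, ?_⟩
    -- projection bound
    set c₀ : ℝ := ∫ x, X x ∂P with hc₀
    have hg2 : MemLp (fun ω => E ω - c₀) 2 P := hE2.sub (memLp_const c₀)
    have hgsm : StronglyMeasurable[m] (fun ω => E ω - c₀) :=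
      hEsm.sub stronglyMeasurable_const
    have hIgu : Integrable ((fun ω => E ω - c₀) * (fun ω => X ω - E ω)) P :=
      my_integrable_mul hg2 hu2
    have hEu : P[fun ω => X ω - E ω|m] =ᵐ[P] 0 := by
      have h1 : P[fun ω => X ω - E ω|m] =ᵐ[P] P[X|m] - P[E|m] :=
        condExp_sub (f := X) (g := E) hIX hIE m
      have h2 : P[E|m] = E := condExp_of_stronglyMeasurable hm hEsm hIE
      filter_upwards [h1] with ω hω
      rw [hω, Pi.sub_apply, h2, ← hE, sub_self, Pi.zero_apply]
    have hcross2 : ∫ ω, (E ω - c₀) * (X ω - E ω) ∂P = 0 := by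
      have hpull := condExp_mul_of_stronglyMeasurable_left (μ := P) hgsm hIgu hIu
      have h0 : P[(fun ω => E ω - c₀) * (fun ω => X ω - E ω)|m] =ᵐ[P] 0 := by
        filter_upwards [hpull, hEu] with ω h1 h2
        rw [h1]
        simp only [Pi.mul_apply, Pi.zero_apply] at h2 ⊢
        rw [h2, mul_zero]
      calc ∫ ω, (E ω - c₀) * (X ω - E ω) ∂P
          = ∫ ω, (P[(fun ω => E ω - c₀) * (fun ω => X ω - E ω)|m]) ω ∂P :=
            (integral_condExp hm).symm
        _ = ∫ ω, (0 : Ω → ℝ) ω ∂P := integral_congr_ae h0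
        _ = 0 := by simp
    have hIg2 : Integrable (fun ω => (E ω - c₀) ^ 2) P := hg2.integrable_sq
    have hIgu' : Integrable (fun ω => (E ω - c₀) * (X ω - E ω)) P := hIgu
    have hexpand : (fun ω => (X ω - c₀) ^ 2)
        = fun ω => (X ω - E ω) ^ 2 + (2 * ((E ω - c₀) * (X ω - E ω)) + (E ω - c₀) ^ 2) := by
      funext ω; ring
    have hJ2 : Integrable (fun ω => 2 * ((E ω - c₀) * (X ω - E ω))) P := hIgu'.const_mul 2
    have hJ23 : Integrable
        (fun ω => 2 * ((E ω - c₀) * (X ω - E ω)) + (E ω - c₀) ^ 2) P := hJ2.add hIg2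
    rw [hexpand, integral_add hIu2 hJ23, integral_add hJ2 hIg2,
      integral_const_mul, hcross2]
    have : 0 ≤ ∫ ω, (E ω - c₀) ^ 2 ∂P := integral_nonneg fun ω => sq_nonneg _
    linarith
  -- conclude
  have hσx4 : (0:ℝ) < σx ^ 4 := by positivity
  constructor
  · intro hcase γ hγ
    have hcoeff : 0 < ρ ^ 2 / σx ^ 4 - δ := by
      rw [sub_pos, lt_div_iff₀ hσx4]
      linarith
    obtain ⟨k1, k2, -⟩ := key γ hγ
    obtain ⟨k1', -, -⟩ := key (fun x => x) measurable_id
    -- value at the identity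
    have hid : (P[X|MeasurableSpace.comap (fun ω => X ω)
        Real.measurableSpace]) = X := by
      have hm' : MeasurableSpace.comap (fun ω => X ω)
          Real.measurableSpace ≤ _ := hXmeas.comap_le
      haveI : SigmaFinite (P.trim hm') := inferInstance
      exact condExp_of_stronglyMeasurable hm'
        ((Measurable.of_comap_le le_rfl).stronglyMeasurable) hIX
    have hzero : ∫ ω, (X ω - X ω) ^ 2 ∂P = (0:ℝ) := by simp
    rw [hF]
    beta_reduce
    beta_reduce at k1'
    rw [hid, hzero] at k1'
    rw [hid, hzero, k1', k1]
    nlinarith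
  · intro hcase γ hγ
    have hcoeff : ρ ^ 2 / σx ^ 4 - δ < 0 := by
      rw [sub_neg, div_lt_iff₀ hσx4]
      linarith
    obtain ⟨k1, -, k3⟩ := key γ hγ
    obtain ⟨k0, -, -⟩ := key (fun _ => 0) measurable_const
    have hbot : MeasurableSpace.comap (fun _ : Ω => (0:ℝ)) Real.measurableSpace = ⊥ :=
      MeasurableSpace.comap_const 0
    rw [hF]
    beta_reduce
    beta_reduce at k0
    rw [hbot, condExp_bot Y, condExp_bot X] at k0 ⊢
    beta_reduce at k0 ⊢
    rw [k0, k1]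
    nlinarith
end
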